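/- Let p ≥ 2 and let Q_sh = {z ∈ {0,1}^p : z_p ≤ z_i for all i ∈ [p−1]}. Then conv(Q_sh) = {z ∈ [0,1]^p : z_p ≤ z_i for all i ∈ [p−1]}. -/

import Mathlib

/-- the convex hull of the strong hierarchy set
`Q_sh = {z ∈ {0,1}^p : z_p ≤ z_i ∀ i ∈ [p-1]}` equals
`{z ∈ [0,1]^p : z_p ≤ z_i ∀ i ∈ [p-1]}`. -/
theorem statement19 (p : ℕ) (hp : 2 ≤ p) :
    convexHull ℝ
        {z : Fin p → ℝ | (∀ i, z i = 0 ∨ z i = 1) ∧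
          ∀ i, i ≠ ⟨p - 1, by omega⟩ → z ⟨p - 1, by omega⟩ ≤ z i} =
      {z : Fin p → ℝ |
        (∀ i, z i ∈ Set.Icc (0 : ℝ) 1) ∧
        ∀ i, i ≠ ⟨p - 1, by omega⟩ → z ⟨p - 1, by omega⟩ ≤ z i} := by
  have hmp : (p - 1) < p := by omega
  set m : Fin p := ⟨p - 1, hmp⟩ with hmdef
  set Q : Set (Fin p → ℝ) := {z : Fin p → ℝ | (∀ i, z i = 0 ∨ z i = 1) ∧
          ∀ i, i ≠ m → z m ≤ z i} with hQ
  set R : Set (Fin p → ℝ) := {z : Fin p → ℝ |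
        (∀ i, z i ∈ Set.Icc (0 : ℝ) 1) ∧
        ∀ i, i ≠ m → z m ≤ z i} with hR
  show convexHull ℝ Q = R
  apply Set.Subset.antisymm
  · apply convexHull_min
    · intro z hz
      refine ⟨fun i => ?_, hz.2⟩
      rcases hz.1 i with h | h <;> simp [h]
    · intro x hx y hy a b ha hb hab
      refine ⟨fun i => ?_, fun i hi => ?_⟩
      · exact (convex_Icc (0:ℝ) 1) (hx.1 i) (hy.1 i) ha hb hab
      · have h1 := hx.2 i hi
        have h2 := hy.2 i hi
        simp only [Pi.add_apply, Pi.smul_apply, smul_eq_mul]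
        nlinarith
  · intro z hz
    obtain ⟨h01, hle⟩ := hz
    set c := z m with hc
    have hc0 : (0:ℝ) ≤ c := (h01 m).1
    have hc1 : c ≤ 1 := (h01 m).2
    by_cases hce : c = 1
    · -- z is the all-ones vector
      have hz1 : ∀ i, z i = 1 := by
        intro i
        by_cases him : i = m
        · rw [him, ← hc, hce]
        · exact le_antisymm (h01 i).2 (by rw [← hce]; exact hle i him)
      apply subset_convexHull
      exact ⟨fun i => Or.inr (hz1 i), fun i hi => by rw [hz1 i, hz1 m]⟩
    · have hclt : c < 1 := lt_of_le_of_ne hc1 hce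
      set w : Fin p → ℝ := fun i => if i = m then 0 else (z i - c) / (1 - c) with hw
      -- the all-ones vector is in Q
      have hone : (fun _ : Fin p => (1:ℝ)) ∈ Q := ⟨fun i => Or.inr rfl, fun i _ => le_refl 1⟩
      -- w is in the convex hull of Q
      have hwmem : w ∈ convexHull ℝ Q := by
        set t : Fin p → Set ℝ := fun i => if i = m then {0} else {0, 1} with ht
        have hsub : Set.univ.pi t ⊆ Q := by
          intro x hx
          have hx' : ∀ i, x i ∈ t i := fun i => hx i (Set.mem_univ i)
          have hxm : x m = 0 := by
            have := hx' m
            simpa [ht] using this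
          refine ⟨fun i => ?_, fun i hi => ?_⟩
          · by_cases him : i = m
            · left; rw [him]; exact hxm
            · have := hx' i
              simpa [ht, him] using this
          · rw [hxm]
            have := hx' i
            simp only [ht, if_neg hi, Set.mem_insert_iff, Set.mem_singleton_iff] at this
            rcases this with h | h <;> rw [h] <;> norm_num
        apply convexHull_mono hsub
        apply mem_convexHull_pi
        intro i _
        by_cases him : i = m
        · rw [him]
          simp only [ht, if_pos rfl, convexHull_singleton]
          simp [hw]
        · simp only [ht, if_neg him]
          have : convexHull ℝ ({0, 1} : Set ℝ) = Set.Icc 0 1 := by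
            rw [convexHull_pair, segment_eq_Icc (by norm_num : (0:ℝ) ≤ 1)]
          rw [this]
          have hzi0 : c ≤ z i := hle i him
          have hzi1 : z i ≤ 1 := (h01 i).2
          constructor
          · simp only [hw, if_neg him]
            apply div_nonneg <;> linarith
          · simp only [hw, if_neg him]
            rw [div_le_one (by linarith)]
            linarith
      -- z is the convex combination c • 1 + (1-c) • w
      have hcomb : z = c • (fun _ : Fin p => (1:ℝ)) + (1 - c) • w := by
        funext i
        simp only [Pi.add_apply, Pi.smul_apply, smul_eq_mul, hw]
        by_cases him : i = m
        · simp [him, ← hc]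
        · rw [if_neg him]
          have hne : (1:ℝ) - c ≠ 0 := by linarith
          field_simp
          ring
      rw [hcomb]
      exact (convex_convexHull ℝ Q) (subset_convexHull ℝ Q hone) hwmem hc0
        (by linarith) (by ring)
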